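/- Let G and H be countable groups, A a finite set with at least two elements, and X ⊆ A^{G∗H} a subshift of finite type over the free product G ∗ H. Then there exist a finite set B with at least two elements, subshifts of finite type V ⊆ B^G and W ⊆ B^H, and a map φ₀ : B → A such that the induced map Φ : B^{G∗H} → A^{G∗H} given by Φ(x)(g) = φ₀(x(g)) restricts to a (G∗H)-equivariant homeomorphism from the free product V ∗ W onto X. -/

import Mathlib

open Topology

/-- The Cantor space `𝒞`. -/
abbrev Cantor : Type := ℕ → Bool

/-- `α : G → C(𝒞,𝒞)` is a continuous action if it is a homomorphism into the
self-homeomorphisms of `𝒞` (recorded as continuous maps; continuity of the inverse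
`α g⁻¹` is automatic from the homomorphism equations). -/
def IsAction (G : Type) [Group G] (α : G → C(Cantor, Cantor)) : Prop :=
  α 1 = ContinuousMap.id Cantor ∧ ∀ g h : G, α (g * h) = (α g).comp (α h)

/-- The space `Act_G(𝒞)` of continuous actions of `G` on the Cantor space,
topologized as a subspace of `C(𝒞,𝒞)^G` (compact-open topology on each factor). -/
abbrev ActSpace (G : Type) [Group G] : Type :=
  {α : G → C(Cantor, Cantor) // IsAction G α}

/-- The conjugacy class of an action `α` under the conjugation action of `Homeo(𝒞)`. -/
def conjClass {G : Type} [Group G] (α : ActSpace G) : Set (ActSpace G) :=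
  {β | ∃ φ : Cantor ≃ₜ Cantor, ∀ g : G,
    (β.1 g : Cantor → Cantor) = φ ∘ (α.1 g : Cantor → Cantor) ∘ φ.symm}

/-- The strong topological Rokhlin property: some action on the Cantor space has a
comeager conjugacy class. -/
def HasSTRP (G : Type) [Group G] : Prop :=
  ∃ α : ActSpace G, conjClass α ∈ residual (ActSpace G)

/-- The shift action of `G` on `A^G`: `(g • x)(h) = x(g⁻¹h)`. -/
def shift {G : Type} [Group G] {A : Type} (g : G) (x : G → A) : G → A :=
  fun h => x (g⁻¹ * h)

/-- A subshift: closed (in the product of discrete topologies) and shift-invariant. -/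
def IsSubshift (G : Type) [Group G] (A : Type) (X : Set (G → A)) : Prop :=
  (letI : TopologicalSpace A := ⊥; IsClosed X) ∧ ∀ g : G, ∀ x ∈ X, shift g x ∈ X

/-- The set `X_F` of `F`-patterns of `X`. -/
def patterns {G A : Type} (F : Finset G) (X : Set (G → A)) : Set (F → A) :=
  (fun (x : G → A) (f : F) => x (f : G)) '' X

/-- Subshift of finite type, with defining window `E` and allowed patterns `𝔽`. -/
def IsSFT (G : Type) [Group G] (A : Type) (X : Set (G → A)) : Prop :=
  ∃ (E : Finset G) (𝔽 : Set (E → A)),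
    ∀ x : G → A, x ∈ X ↔ ∀ g : G, (fun e : E => shift g x (e : G)) ∈ 𝔽

/-- Continuity on a set, for a map between full shift spaces over discrete alphabets. -/
def ContinuousOnD {G A B : Type} (ψ : (G → B) → (G → A)) (Z : Set (G → B)) : Prop :=
  letI : TopologicalSpace A := ⊥
  letI : TopologicalSpace B := ⊥
  ContinuousOn ψ Z

/-- `G`-equivariance of a map between shift spaces, on a set. -/
def EquivariantOn {G A B : Type} [Group G] (ψ : (G → B) → (G → A)) (Z : Set (G → B)) : Prop :=
  ∀ g : G, ∀ z ∈ Z, ψ (shift g z) = shift g (ψ z)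

/-- A sofic subshift: a continuous `G`-equivariant image of a subshift of finite type. -/
def IsSofic (G : Type) [Group G] (A : Type) (X : Set (G → A)) : Prop :=
  ∃ (B : Type) (_ : Fintype B) (_ : Nontrivial B) (Z : Set (G → B))
    (ψ : (G → B) → (G → A)),
    IsSubshift G B Z ∧ IsSFT G B Z ∧ ContinuousOnD ψ Z ∧ EquivariantOn ψ Z ∧ ψ '' Z = X

/-- The sliding block code `Φ(y)(g) = f(d ↦ y(g·d))` induced by `f : (D → B) → A`. -/
def slidingBlock {G : Type} [Group G] {A B : Type} (D : Finset G)
    (f : (D → B) → A) : (G → B) → (G → A) :=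
  fun y g => f (fun d => y (g * (d : G)))

/-- A projectively isolated subshift. -/
def ProjIsolated (G : Type) [Group G] (A : Type) (X : Set (G → A)) : Prop :=
  ∃ (B : Type) (_ : Fintype B) (_ : Nontrivial B) (Y : Set (G → B))
    (F D : Finset G) (f : (D → B) → A),
    IsSubshift G B Y ∧
    slidingBlock D f '' Y = X ∧
    ∀ Z : Set (G → B), IsSubshift G B Z → patterns F Z = patterns F Y →
      slidingBlock D f '' Z = X

/-- An isolated subshift: an SFT `X` such that for some finite `F ⊆ G` no proper
subshift has the same `F`-patterns as `X`. -/
def IsIsolated (G : Type) [Group G] (A : Type) (X : Set (G → A)) : Prop :=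
  IsSFT G A X ∧ ∃ F : Finset G, ∀ Y : Set (G → A),
    IsSubshift G A Y → Y ⊂ X → patterns F Y ≠ patterns F X

/-- A strongly projectively isolated subshift: a continuous `G`-equivariant image of an
isolated subshift. -/
def StronglyProjIsolated (G : Type) [Group G] (A : Type) (X : Set (G → A)) : Prop :=
  ∃ (B : Type) (_ : Fintype B) (_ : Nontrivial B) (Y : Set (G → B))
    (ψ : (G → B) → (G → A)),
    IsSubshift G B Y ∧ IsIsolated G B Y ∧
    ContinuousOnD ψ Y ∧ EquivariantOn ψ Y ∧ ψ '' Y = X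

/-- Shadowing (the pseudo-orbit tracing property) of an action `act` of `G`,
with respect to a distance function `d`. -/
def HasShadowing {G X : Type} [Group G] (d : X → X → ℝ) (act : G → X → X) : Prop :=
  ∀ ε : ℝ, 0 < ε → ∃ (δ : ℝ) (S : Finset G), 0 < δ ∧
    ∀ x : G → X, (∀ g : G, ∀ s ∈ S, d (act s (x g)) (x (s * g)) < δ) →
      ∃ y : X, ∀ g : G, d (x g) (act g y) < ε

/-- A finite partition of the whole space into nonempty clopen sets. -/
def IsClopenPartition {X : Type} [TopologicalSpace X] (parts : Finset (Set X)) : Prop :=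
  (∀ P ∈ parts, IsClopen P ∧ P.Nonempty) ∧
  (∀ P ∈ parts, ∀ Q ∈ parts, P ≠ Q → Disjoint P Q) ∧
  (⋃ P ∈ parts, P) = Set.univ

/-- A finite partition of a subshift `X` into nonempty subsets that are clopen in `X`. -/
def IsClopenPartitionIn {G A : Type} (X : Set (G → A)) (parts : Finset (Set (G → A))) : Prop :=
  (letI : TopologicalSpace A := ⊥;
    ∀ P ∈ parts, P.Nonempty ∧ P ⊆ X ∧ IsClopen (Subtype.val ⁻¹' P : Set X)) ∧
  (∀ P ∈ parts, ∀ Q ∈ parts, P ≠ Q → Disjoint P Q) ∧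
  (⋃ P ∈ parts, P) = X

/-- `X` is `fam`-minimal: no nonempty proper subshift of `X` meets every member of `fam`. -/
def AMinimal {G A : Type} [Group G] (X : Set (G → A)) (fam : Set (Set (G → A))) : Prop :=
  ¬ ∃ Y : Set (G → A), IsSubshift G A Y ∧ Y.Nonempty ∧ Y ⊂ X ∧
    ∀ S ∈ fam, (Y ∩ S).Nonempty

/-- The free product of a subshift `V ⊆ B^G` and a subshift `W ⊆ B^H`, a subshift
of `B^(G∗H)`. -/
def freeProd {G H B : Type} [Group G] [Group H]
    (V : Set (G → B)) (W : Set (H → B)) : Set (Monoid.Coprod G H → B) :=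
  {x | ∀ g : Monoid.Coprod G H,
    (fun h : G => x (g * Monoid.Coprod.inl h)) ∈ V ∧
    (fun k : H => x (g * Monoid.Coprod.inr k)) ∈ W}

/-- Continuity of a map into a finite (discrete) alphabet. -/
def ContinuousToDiscrete {X A : Type} [TopologicalSpace X] (c : X → A) : Prop :=
  letI : TopologicalSpace A := ⊥
  Continuous c

/-- Continuity of a map into the shift space `A^G` over a discrete alphabet `A`. -/
def ContinuousIntoShift {X G A : Type} [TopologicalSpace X] (φ : X → (G → A)) : Prop :=
  letI : TopologicalSpace A := ⊥
  Continuous φ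

section Aux

open scoped Pointwise

variable {Γ K A : Type} [Group Γ] [Group K]

lemma shift_shift {B : Type} (g g' : Γ) (y : Γ → B) :
    shift g (shift g' y) = shift (g * g') y := by
  funext h
  simp [shift, mul_assoc, mul_inv_rev]

lemma isSubshift_window {B : Type} (E : Finset Γ) (𝔽 : Set (↥E → B)) :
    IsSubshift Γ B {y : Γ → B | ∀ g : Γ, (fun e : ↥E => shift g y ↑e) ∈ 𝔽} := by
  constructor
  · letI : TopologicalSpace B := ⊥
    haveI : DiscreteTopology B := ⟨rfl⟩
    have hset : {y : Γ → B | ∀ g : Γ, (fun e : ↥E => shift g y ↑e) ∈ 𝔽} =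
        ⋂ g : Γ, (fun (y : Γ → B) (e : ↥E) => y (g⁻¹ * ↑e)) ⁻¹' 𝔽 := by
      ext y
      simp only [Set.mem_setOf_eq, Set.mem_iInter, Set.mem_preimage]
      rfl
    rw [hset]
    refine isClosed_iInter fun g => IsClosed.preimage ?_ (isClosed_discrete _)
    exact continuous_pi fun e => continuous_apply _
  · intro g x hx g'
    have h := hx (g' * g)
    have heq : (fun e : ↥E => shift g' (shift g x) ↑e)
        = (fun e : ↥E => shift (g' * g) x ↑e) := by
      rw [shift_shift]
    rw [heq]
    exact h

def SGset (ι : K →* Γ) (T : Finset Γ) : Set K :=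
  {s | ∃ t ∈ T, ∃ t' ∈ T, t = ι s * t'}

lemma sgset_finite (ι : K →* Γ) (hι : Function.Injective ι) (T : Finset Γ) :
    (SGset ι T).Finite := by
  have h : SGset ι T ⊆ ι ⁻¹' ((T : Set Γ) * (T : Set Γ)⁻¹) := by
    rintro s ⟨t, ht, t', ht', hst⟩
    refine ⟨t, ht, t'⁻¹, Set.inv_mem_inv.mpr ht', ?_⟩
    rw [hst]; group
  exact (((T.finite_toSet).mul (T.finite_toSet.inv)).preimage hι.injOn).subset h

noncomputable def windowF (ι : K →* Γ) (hι : Function.Injective ι) (T : Finset Γ) : Finset K :=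
  letI := Classical.decEq K
  insert 1 (sgset_finite ι hι T).toFinset

lemma one_mem_windowF (ι : K →* Γ) (hι : Function.Injective ι) (T : Finset Γ) :
    (1 : K) ∈ windowF ι hι T := by
  classical
  exact Finset.mem_insert_self _ _

lemma mem_windowF {ι : K →* Γ} {hι : Function.Injective ι} {T : Finset Γ} {s : K}
    (h : s ∈ SGset ι T) : s ∈ windowF ι hι T := by
  classical
  exact Finset.mem_insert_of_mem ((sgset_finite ι hι T).mem_toFinset.mpr h)

variable (A) in
def FV (ι : K →* Γ) (hι : Function.Injective ι) (T : Finset Γ)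
    (E : Finset Γ) (𝔽 : Set (↥E → A)) (hET : ∀ e ∈ E, e ∈ T) :
    Set (↥(windowF ι hι T) → (↥T → A)) :=
  { q | (fun e : ↥E => q ⟨1, one_mem_windowF ι hι T⟩ ⟨(e : Γ), hET _ e.2⟩) ∈ 𝔽 ∧
        ∀ (s : K) (hs : s ∈ windowF ι hι T) (t t' : Γ) (ht : t ∈ T) (ht' : t' ∈ T),
          t = ι s * t' → q ⟨s, hs⟩ ⟨t', ht'⟩ = q ⟨1, one_mem_windowF ι hι T⟩ ⟨t, ht⟩ }

variable (A) in
def VV (ι : K →* Γ) (hι : Function.Injective ι) (T : Finset Γ)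
    (E : Finset Γ) (𝔽 : Set (↥E → A)) (hET : ∀ e ∈ E, e ∈ T) :
    Set (K → (↥T → A)) :=
  { y | ∀ g : K, (fun e : ↥(windowF ι hι T) => shift g y ↑e) ∈ FV A ι hι T E 𝔽 hET }

lemma VV_isSFT (ι : K →* Γ) (hι : Function.Injective ι) (T : Finset Γ)
    (E : Finset Γ) (𝔽 : Set (↥E → A)) (hET : ∀ e ∈ E, e ∈ T) :
    IsSFT K (↥T → A) (VV A ι hι T E 𝔽 hET) :=
  ⟨windowF ι hι T, FV A ι hι T E 𝔽 hET, fun _ => Iff.rfl⟩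

lemma VV_isSubshift (ι : K →* Γ) (hι : Function.Injective ι) (T : Finset Γ)
    (E : Finset Γ) (𝔽 : Set (↥E → A)) (hET : ∀ e ∈ E, e ∈ T) :
    IsSubshift K (↥T → A) (VV A ι hι T E 𝔽 hET) :=
  isSubshift_window _ _

lemma VV_pattern {ι : K →* Γ} {hι : Function.Injective ι} {T : Finset Γ}
    {E : Finset Γ} {𝔽 : Set (↥E → A)} {hET : ∀ e ∈ E, e ∈ T}
    {y : K → (↥T → A)} (hy : y ∈ VV A ι hι T E 𝔽 hET) :
    (fun e : ↥E => y 1 ⟨(e : Γ), hET _ e.2⟩) ∈ 𝔽 := by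
  have h := (hy 1).1
  simpa [shift] using h

lemma VV_overlap {ι : K →* Γ} {hι : Function.Injective ι} {T : Finset Γ}
    {E : Finset Γ} {𝔽 : Set (↥E → A)} {hET : ∀ e ∈ E, e ∈ T}
    {y : K → (↥T → A)} (hy : y ∈ VV A ι hι T E 𝔽 hET)
    (s : K) (t t' : Γ) (ht : t ∈ T) (ht' : t' ∈ T) (hst : t = ι s * t') :
    y s ⟨t', ht'⟩ = y 1 ⟨t, ht⟩ := by
  have hs : s ∈ windowF ι hι T := mem_windowF ⟨t, ht, t', ht', hst⟩
  have h := (hy 1).2 s hs t t' ht ht' hst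
  simpa [shift] using h

lemma mem_VV_of {ι : K →* Γ} {hι : Function.Injective ι} {T : Finset Γ}
    {E : Finset Γ} {𝔽 : Set (↥E → A)} {hET : ∀ e ∈ E, e ∈ T}
    (x : Γ → A) (hx : ∀ g : Γ, (fun e : ↥E => x (g * ↑e)) ∈ 𝔽) (c : Γ) :
    (fun (h : K) (t : ↥T) => x (c * ι h * ↑t)) ∈ VV A ι hι T E 𝔽 hET := by
  intro g
  constructor
  · simpa [shift, mul_one] using hx (c * ι g⁻¹)
  · intro s hs t t' ht ht' hst
    subst hst
    simp only [shift]
    congr 1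
    simp [map_mul, mul_assoc]

end Aux

/-- Every SFT over a free product `G ∗ H` is, via a one-block code,
equivariantly homeomorphic to a free product of an SFT over `G` with an SFT over `H`. -/
theorem sft_over_free_product_decomposition (G H : Type) [Group G] [Group H]
    [Countable G] [Countable H]
    (A : Type) [Fintype A] [Nontrivial A]
    (X : Set (Monoid.Coprod G H → A))
    (hX : IsSubshift (Monoid.Coprod G H) A X)
    (hSFT : IsSFT (Monoid.Coprod G H) A X) :
    ∃ (B : Type) (_ : Fintype B) (_ : Nontrivial B)
      (V : Set (G → B)) (W : Set (H → B)) (φ₀ : B → A),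
      IsSubshift G B V ∧ IsSFT G B V ∧ IsSubshift H B W ∧ IsSFT H B W ∧
      (∀ (g : Monoid.Coprod G H) (x : Monoid.Coprod G H → B),
        (fun h : Monoid.Coprod G H => φ₀ (shift g x h)) =
          shift g (fun h : Monoid.Coprod G H => φ₀ (x h))) ∧
      Set.InjOn
        (fun (x : Monoid.Coprod G H → B) (g : Monoid.Coprod G H) => φ₀ (x g))
        (freeProd V W) ∧
      (fun (x : Monoid.Coprod G H → B) (g : Monoid.Coprod G H) => φ₀ (x g)) ''
        freeProd V W = X := by
  classical
  obtain ⟨E, 𝔽, hE⟩ := hSFT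
  set letter : G ⊕ H → Monoid.Coprod G H :=
    Sum.elim (fun g => Monoid.Coprod.inl g) (fun h => Monoid.Coprod.inr h) with hletter
  have exists_list : ∀ m : Monoid.Coprod G H,
      ∃ L : List (G ⊕ H), (L.map letter).prod = m := by
    intro m
    induction m using Monoid.Coprod.induction_on' with
    | one => exact ⟨[], by simp⟩
    | inl_mul s x ih =>
        obtain ⟨L, hL⟩ := ih
        exact ⟨Sum.inl s :: L, by subst hL; simp [hletter]⟩
    | inr_mul s x ih =>
        obtain ⟨L, hL⟩ := ih
        exact ⟨Sum.inr s :: L, by subst hL; simp [hletter]⟩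
  choose w hw using exists_list
  set Tset : Set (Monoid.Coprod G H) :=
    {1} ∪ ⋃ e ∈ (E : Set (Monoid.Coprod G H)),
      {m | ∃ l, l <:+ w e ∧ (l.map letter).prod = m} with hTset
  have hTfin : Tset.Finite := by
    refine (Set.finite_singleton _).union
      (Set.Finite.biUnion E.finite_toSet fun e _ => ?_)
    have hsub : {m | ∃ l, l <:+ w e ∧ (l.map letter).prod = m}
        ⊆ (fun l : List (G ⊕ H) => (l.map letter).prod) '' {l | l ∈ (w e).tails} := by
      rintro m ⟨l, hl, rfl⟩
      exact ⟨l, by simpa using hl, rfl⟩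
    exact (((w e).tails.finite_toSet).image _).subset hsub
  set T : Finset (Monoid.Coprod G H) := hTfin.toFinset with hTdef
  have memT : ∀ m, m ∈ T ↔ m ∈ Tset := fun m => hTfin.mem_toFinset
  have h1T : (1 : Monoid.Coprod G H) ∈ T := (memT 1).mpr (Or.inl rfl)
  have hET : ∀ e ∈ E, (e : Monoid.Coprod G H) ∈ T := fun e he =>
    (memT e).mpr (Or.inr (Set.mem_biUnion he ⟨w e, List.suffix_refl _, hw e⟩))
  haveI : Nonempty ↥T := ⟨⟨1, h1T⟩⟩
  set V : Set (G → (↥T → A)) :=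
    VV A Monoid.Coprod.inl Monoid.Coprod.inl_injective T E 𝔽 hET with hVdef
  set W : Set (H → (↥T → A)) :=
    VV A Monoid.Coprod.inr Monoid.Coprod.inr_injective T E 𝔽 hET with hWdef
  -- propagation
  have prop : ∀ xx ∈ freeProd V W, ∀ (t : Monoid.Coprod G H) (ht : t ∈ T)
      (c : Monoid.Coprod G H), xx c ⟨t, ht⟩ = xx (c * t) ⟨1, h1T⟩ := by
    intro xx hxx
    have overlapG : ∀ (c : Monoid.Coprod G H) (s : G) (t t' : Monoid.Coprod G H)
        (ht : t ∈ T) (ht' : t' ∈ T), t = Monoid.Coprod.inl s * t' →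
        xx (c * Monoid.Coprod.inl s) ⟨t', ht'⟩ = xx c ⟨t, ht⟩ := by
      intro c s t t' ht ht' hst
      have h := VV_overlap (hxx c).1 s t t' ht ht' hst
      simpa using h
    have overlapH : ∀ (c : Monoid.Coprod G H) (s : H) (t t' : Monoid.Coprod G H)
        (ht : t ∈ T) (ht' : t' ∈ T), t = Monoid.Coprod.inr s * t' →
        xx (c * Monoid.Coprod.inr s) ⟨t', ht'⟩ = xx c ⟨t, ht⟩ := by
      intro c s t t' ht ht' hst
      have h := VV_overlap (hxx c).2 s t t' ht ht' hst
      simpa using h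
    have key : ∀ l : List (G ⊕ H),
        (∀ l', l' <:+ l → ((l'.map letter).prod ∈ T)) →
        ∀ (c : Monoid.Coprod G H) (hp : (l.map letter).prod ∈ T),
        xx c ⟨(l.map letter).prod, hp⟩ = xx (c * (l.map letter).prod) ⟨1, h1T⟩ := by
      intro l
      induction l with
      | nil =>
          intro _ c hp
          simp only [List.map_nil, List.prod_nil, mul_one]
      | cons a l ih =>
          intro hall c hp
          have hl : (l.map letter).prod ∈ T := hall l (List.suffix_cons a l)
          have hall' : ∀ l', l' <:+ l → ((l'.map letter).prod ∈ T) :=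
            fun l' hl' => hall l' (hl'.trans (List.suffix_cons a l))
          cases a with
          | inl s =>
              have hstep : (List.map letter (Sum.inl s :: l)).prod
                  = Monoid.Coprod.inl s * (l.map letter).prod := by
                simp [hletter]
              have h1 := overlapG c s _ _ hp hl hstep
              rw [← h1, ih hall' (c * Monoid.Coprod.inl s) hl]
              congr 1
              rw [hstep, mul_assoc]
          | inr s =>
              have hstep : (List.map letter (Sum.inr s :: l)).prod
                  = Monoid.Coprod.inr s * (l.map letter).prod := by
                simp [hletter]
              have h1 := overlapH c s _ _ hp hl hstep
              rw [← h1, ih hall' (c * Monoid.Coprod.inr s) hl]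
              congr 1
              rw [hstep, mul_assoc]
    intro t ht c
    rcases (memT t).mp ht with h1 | h2
    · rcases h1 with rfl
      simp only [mul_one]
    · rw [Set.mem_iUnion₂] at h2
      obtain ⟨e, he, l, hsuf, hprod⟩ := h2
      subst hprod
      exact key l (fun l' hl' => (memT _).mpr (Or.inr
        (Set.mem_biUnion he ⟨l', hl'.trans hsuf, rfl⟩))) c ht
  refine ⟨(↥T → A), inferInstance, inferInstance, V, W, (fun p => p ⟨1, h1T⟩),
    VV_isSubshift _ _ _ _ _ _, VV_isSFT _ _ _ _ _ _,
    VV_isSubshift _ _ _ _ _ _, VV_isSFT _ _ _ _ _ _,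
    fun g x => rfl, ?_, ?_⟩
  · -- injectivity
    intro xx hxx yy hyy heq
    funext c
    funext t
    obtain ⟨t, ht⟩ := t
    rw [prop xx hxx t ht c, prop yy hyy t ht c]
    exact congrFun heq (c * t)
  · -- image = X
    apply Set.eq_of_subset_of_subset
    · rintro x ⟨xx, hxx, rfl⟩
      rw [hE]
      intro g
      have hpat := VV_pattern (hxx g⁻¹).1
      have heq2 : (fun e : ↥E =>
            shift g (fun c : Monoid.Coprod G H => xx c ⟨1, h1T⟩) ↑e)
          = (fun e : ↥E => xx (g⁻¹ * Monoid.Coprod.inl (1 : G)) ⟨(e : Monoid.Coprod G H), hET _ e.2⟩) := by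
        funext e
        simp only [shift, map_one, mul_one]
        exact (prop xx hxx e (hET _ e.2) g⁻¹).symm
      exact heq2 ▸ hpat
    · intro x hx
      have hx' : ∀ g : Monoid.Coprod G H, (fun e : ↥E => x (g * ↑e)) ∈ 𝔽 := by
        intro g
        have h := (hE x).mp hx g⁻¹
        simpa [shift] using h
      refine ⟨fun c => fun t : ↥T => x (c * ↑t), fun c => ⟨?_, ?_⟩, ?_⟩
      · exact mem_VV_of x hx' c
      · exact mem_VV_of x hx' c
      · funext c
        simp only [mul_one]
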